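/- The twisted derivations on 'f preserve the radical of the bilinear form: for all i ∈ I and all x, y ∈ 'f one has (θ_i y, x) = (θ_i, θ_i)(y, ᵢr(x)) and (y θ_i, x) = (θ_i, θ_i)(y, rᵢ(x)); consequently ᵢr and rᵢ descend to f = 'f/Rad. Moreover if x ∈ f has nonzero weight ν ∈ ℕ[I] and rᵢ(x) = 0 for all i ∈ I, then x = 0. -/

import Mathlib

/- The ring `Aq = ℚ(q)[π]/(π²-1) ≅ ℚ(q) × ℚ(q)` (via π ↦ (1, -1), an isomorphism
since 2 is invertible).  Division/inversion is componentwise (the total fraction ring). -/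
noncomputable section

abbrev Aq : Type := RatFunc ℚ × RatFunc ℚ

/-- the element `q` -/
def qA : Aq := (RatFunc.X, RatFunc.X)

/-- the element `π`, satisfying `π² = 1` -/
def pA : Aq := (1, -1)

/-- The `(q,π)`-binomial coefficient
`[[a;t]] = (∏_{s=0}^{t-1} ((πq)^{a-s} - q^{s-a})) / (∏_{s=1}^{t} ((πq)^s - q^{-s}))`. -/
def qbinom (a : ℤ) (t : ℕ) : Aq :=
  (∏ s ∈ Finset.range t, ((pA * qA) ^ (a - (s : ℤ)) - qA ^ ((s : ℤ) - a))) /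
  (∏ s ∈ Finset.range t, ((pA * qA) ^ ((s : ℤ) + 1) - qA ^ (-((s : ℤ) + 1))))


/-- A super Cartan datum: `I = I₀ ⊔ I₁` (parity `p : I → {0,1}`), symmetric form `Bf`,
with `Bf i i = 2 d i > 0`, `⟨i,j'⟩ = aij i j = 2(i·j)/(i·i) ∈ -ℕ` for `i ≠ j`,
even for odd `i`, and `I₁ ≠ ∅`. -/
structure SCD (I : Type) (Bf : I → I → ℤ) (p d : I → ℕ) (aij : I → I → ℤ) : Prop where
  symm : ∀ i j, Bf i j = Bf j i
  diag : ∀ i, Bf i i = 2 * (d i : ℤ)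
  dpos : ∀ i, 0 < d i
  div : ∀ i j, (d i : ℤ) * aij i j = Bf i j
  offdiag : ∀ i j, i ≠ j → aij i j ≤ 0
  par_le : ∀ i, p i ≤ 1
  odd_even : ∀ i j, p i = 1 → Even (aij i j)
  odd_nonempty : ∃ i, p i = 1

/-- the pairing `|w|·|w'|` of the weights of two words -/
def wtB {I : Type} (Bf : I → I → ℤ) (w w' : FreeMonoid I) : ℤ :=
  ((FreeMonoid.toList w).map fun i =>
    ((FreeMonoid.toList w').map fun j => Bf i j).sum).sum

/-- the parity `p(w)` of a word -/
def par {I : Type} (p : I → ℕ) (w : FreeMonoid I) : ℕ :=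
  ((FreeMonoid.toList w).map p).sum

/-- the twisting factor `q^{|w|·|w'|} π^{p(w)p(w')}` -/
def tw {I : Type} (Bf : I → I → ℤ) (p : I → ℕ) (w w' : FreeMonoid I) : Aq :=
  qA ^ wtB Bf w w' * pA ^ (par p w * par p w')

/-- the free associative superalgebra `'f` on generators `θ_i`, realized as the monoid
algebra of the free monoid on `I` (so the words are the standard homogeneous basis) -/
abbrev FF (I : Type) : Type := MonoidAlgebra Aq (FreeMonoid I)

/-- the basis element of `'f` corresponding to a word `w` -/
def ofW {I : Type} (w : FreeMonoid I) : FF I := MonoidAlgebra.of Aq (FreeMonoid I) w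

/-- the generator `θ_i` -/
def th {I : Type} (i : I) : FF I := ofW (FreeMonoid.of i)

/-- `q_i = q^{i·i/2}` -/
def qi {I : Type} (d : I → ℕ) (i : I) : Aq := qA ^ d i

/-- `π_i = π^{p(i)}` -/
def pi' {I : Type} (p : I → ℕ) (i : I) : Aq := pA ^ p i

/-- `[m]_i = ((π_i q_i)^m - q_i^{-m})/(π_i q_i - q_i^{-1})` -/
def qinti {I : Type} (p d : I → ℕ) (i : I) (m : ℕ) : Aq :=
  ((pi' p i * qi d i) ^ m - qi d i ^ (-(m : ℤ))) / (pi' p i * qi d i - (qi d i)⁻¹)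

/-- `[m]_i! = ∏_{s=1}^m [s]_i` -/
def qfacti {I : Type} (p d : I → ℕ) (i : I) (m : ℕ) : Aq :=
  ∏ s ∈ Finset.range m, qinti p d i (s + 1)

/-- the divided power `θ_i^{(n)} = θ_i^n/[n]_i!` -/
def thpow {I : Type} (p d : I → ℕ) (i : I) (n : ℕ) : FF I :=
  (qfacti p d i n)⁻¹ • th i ^ n

/-- The defining properties of the bilinear form `(·,·)` on `'f`:
`(1,1)=1`, `(θ_i,θ_j) = δ_{ij}(1-π_i q_i^{-2})^{-1}`, `(x, y'y'') = (r(x), y'⊗y'')` and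
`(xx', y'') = (x⊗x', r(y''))`, where the form on the twisted tensor square `T2` is
`(x₁⊗x₂, x₁'⊗x₂') = (x₁,x₁')(x₂,x₂')` (expressed by expanding along the basis `b2`). -/
structure FormProps (I : Type) [DecidableEq I] (Bf : I → I → ℤ) (p d : I → ℕ)
    (T2 : Type) [Ring T2] [Algebra Aq T2]
    (b2 : Module.Basis (FreeMonoid I × FreeMonoid I) Aq T2)
    (r : FF I →ₐ[Aq] T2)
    (B : FF I →ₗ[Aq] FF I →ₗ[Aq] Aq) : Prop where
  one_one : B 1 1 = 1
  gen : ∀ i j, B (th i) (th j) =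
      if i = j then (1 - pi' p i * qi d i ^ (-2 : ℤ))⁻¹ else 0
  mul_right : ∀ x y' y'', B x (y' * y'') =
      (b2.repr (r x)).sum fun pr c => c * B (ofW pr.1) y' * B (ofW pr.2) y''
  mul_left : ∀ x x' y'', B (x * x') y'' =
      (b2.repr (r y'')).sum fun pr c => c * B x (ofW pr.1) * B x' (ofW pr.2)

/-- reversal of a word -/
def revW {I : Type} (w : FreeMonoid I) : FreeMonoid I :=
  FreeMonoid.ofList (FreeMonoid.toList w).reverse

/-- the weight `|w| ∈ ℕ[I]` of a word -/
def wtF {I : Type} (w : FreeMonoid I) : I →₀ ℕ :=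
  ((FreeMonoid.toList w).map fun i => Finsupp.single i 1).sum

set_option linter.unusedSectionVars false
set_option synthInstance.maxHeartbeats 1000000
set_option maxHeartbeats 1000000
section Aux
variable {I : Type} [DecidableEq I]

instance : DecidableEq (FreeMonoid I) := instDecidableEqList

lemma ofW_mul (w w' : FreeMonoid I) : ofW (w * w') = ofW w * ofW w' :=
  map_mul (MonoidAlgebra.of Aq (FreeMonoid I)) w w'

lemma ofW_one : ofW (1 : FreeMonoid I) = 1 :=
  map_one (MonoidAlgebra.of Aq (FreeMonoid I))

lemma fm_ext {a b : FreeMonoid I} (h : FreeMonoid.toList a = FreeMonoid.toList b) : a = b := by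
  rw [← FreeMonoid.ofList_toList a, ← FreeMonoid.ofList_toList b, h]

lemma fm_eq_iff {a b : FreeMonoid I} : a = b ↔ FreeMonoid.toList a = FreeMonoid.toList b :=
  ⟨fun h => by rw [h], fm_ext⟩

lemma mul_of_eq_of {i j : I} {w : FreeMonoid I} :
    FreeMonoid.of j * w = FreeMonoid.of i ↔ j = i ∧ w = 1 := by
  rw [fm_eq_iff, fm_eq_iff (a := w)]
  simp [FreeMonoid.toList_mul, FreeMonoid.toList_of, FreeMonoid.toList_one]

lemma of_mul_eq_of {i j : I} {w : FreeMonoid I} :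
    w * FreeMonoid.of j = FreeMonoid.of i ↔ w = 1 ∧ j = i := by
  rw [fm_eq_iff, fm_eq_iff (a := w)]
  simp only [FreeMonoid.toList_mul, FreeMonoid.toList_of, FreeMonoid.toList_one]
  constructor
  · intro h
    rcases List.append_eq_cons_iff.mp h with ⟨h1, h2⟩ | ⟨_, h1, h2⟩
    · refine ⟨h1, ?_⟩; simp_all
    · simp at h2
  · rintro ⟨h1, h2⟩; simp [h1, h2]

lemma of_mul_ne_one {j : I} {w : FreeMonoid I} : FreeMonoid.of j * w ≠ 1 := by
  rw [Ne, fm_eq_iff]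
  simp [FreeMonoid.toList_mul, FreeMonoid.toList_of, FreeMonoid.toList_one]

lemma mul_of_ne_one {j : I} {w : FreeMonoid I} : w * FreeMonoid.of j ≠ 1 := by
  rw [Ne, fm_eq_iff]
  simp [FreeMonoid.toList_mul, FreeMonoid.toList_of, FreeMonoid.toList_one]

lemma of_ne_one {j : I} : (FreeMonoid.of j : FreeMonoid I) ≠ 1 := by
  rw [Ne, fm_eq_iff]
  simp [FreeMonoid.toList_of, FreeMonoid.toList_one]

variable (Bf : I → I → ℤ) (p : I → ℕ)

lemma tw_one_left (w : FreeMonoid I) : tw Bf p 1 w = 1 := by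
  simp [tw, wtB, par, FreeMonoid.toList_one]

lemma tw_one_right (w : FreeMonoid I) : tw Bf p w 1 = 1 := by
  simp [tw, wtB, par, FreeMonoid.toList_one]

lemma tw_of_of (j i : I) :
    tw Bf p (FreeMonoid.of j) (FreeMonoid.of i) = pA ^ (p j * p i) * qA ^ Bf j i := by
  simp [tw, wtB, par, FreeMonoid.toList_of, mul_comm]

end Aux
section Main
variable {I : Type} [DecidableEq I] (Bf : I → I → ℤ) (p : I → ℕ)
variable {T2 : Type} [Ring T2] [Algebra Aq T2]
variable (b2 : Module.Basis (FreeMonoid I × FreeMonoid I) Aq T2)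

/-- selector map: sends `t = Σ c_pr b2 pr` to `Σ_{pr ∈ P} c_pr ofW (g pr)` -/
def sel2 (P : FreeMonoid I × FreeMonoid I → Prop) [DecidablePred P]
    (g : FreeMonoid I × FreeMonoid I → FreeMonoid I) : T2 →ₗ[Aq] FF I :=
  (Finsupp.lsum Aq fun pr : FreeMonoid I × FreeMonoid I =>
    if P pr then LinearMap.toSpanSingleton Aq (FF I) (ofW (g pr)) else 0)
    ∘ₗ b2.repr.toLinearMap

lemma sel2_apply (P : FreeMonoid I × FreeMonoid I → Prop) [DecidablePred P]
    (g : FreeMonoid I × FreeMonoid I → FreeMonoid I) (t : T2) :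
    sel2 b2 P g t = (b2.repr t).sum fun pr c => if P pr then c • ofW (g pr) else 0 := by
  rw [sel2, LinearMap.comp_apply, Finsupp.lsum_apply]
  apply Finsupp.sum_congr
  intro pr _
  by_cases h : P pr <;> simp [h]

lemma sel2_b2 (P : FreeMonoid I × FreeMonoid I → Prop) [DecidablePred P]
    (g : FreeMonoid I × FreeMonoid I → FreeMonoid I) (pr : FreeMonoid I × FreeMonoid I) :
    sel2 b2 P g (b2 pr) = if P pr then ofW (g pr) else 0 := by
  rw [sel2_apply, b2.repr_self, Finsupp.sum_single_index] <;>
    by_cases h : P pr <;> simp [h]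

/-- `Li i t` = coefficient part of `t` along `θ_i ⊗ -` -/
def Li (i : I) : T2 →ₗ[Aq] FF I := sel2 b2 (fun pr => pr.1 = FreeMonoid.of i) Prod.snd
/-- `Ri i t` = coefficient part of `t` along `- ⊗ θ_i` -/
def Ri (i : I) : T2 →ₗ[Aq] FF I := sel2 b2 (fun pr => pr.2 = FreeMonoid.of i) Prod.fst
/-- part of `t` along `1 ⊗ -` -/
def El : T2 →ₗ[Aq] FF I := sel2 b2 (fun pr => pr.1 = 1) Prod.snd
/-- part of `t` along `- ⊗ 1` -/
def Er : T2 →ₗ[Aq] FF I := sel2 b2 (fun pr => pr.2 = 1) Prod.fst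

variable (hmul : ∀ w1 w2 w1' w2', b2 (w1, w2) * b2 (w1', w2')
        = tw Bf p w2 w1' • b2 (w1 * w1', w2 * w2'))
variable (r : FF I →ₐ[Aq] T2)
variable (hone : b2 (1, 1) = 1)
variable (hr : ∀ i, r (th i) = b2 (FreeMonoid.of i, 1) + b2 (1, FreeMonoid.of i))

include hmul hr in
lemma rth_mul_b2 (j : I) (pr : FreeMonoid I × FreeMonoid I) :
    r (th j) * b2 pr = b2 (FreeMonoid.of j * pr.1, pr.2)
      + tw Bf p (FreeMonoid.of j) pr.1 • b2 (pr.1, FreeMonoid.of j * pr.2) := by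
  obtain ⟨w1, w2⟩ := pr
  rw [hr, add_mul, hmul, hmul, tw_one_left, one_smul, one_mul, one_mul]

include hmul hr in
lemma b2_mul_rth (j : I) (pr : FreeMonoid I × FreeMonoid I) :
    b2 pr * r (th j) = tw Bf p pr.2 (FreeMonoid.of j) • b2 (pr.1 * FreeMonoid.of j, pr.2)
      + b2 (pr.1, pr.2 * FreeMonoid.of j) := by
  obtain ⟨w1, w2⟩ := pr
  rw [hr, mul_add, hmul, hmul, tw_one_right, one_smul, mul_one, mul_one]

include hmul hr in
lemma Li_mul (i j : I) (t : T2) :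
    Li b2 i (r (th j) * t) = (if i = j then El b2 t else 0)
      + (pA ^ (p j * p i) * qA ^ Bf j i) • (th j * Li b2 i t) := by
  by_cases hij : i = j
  · subst hij
    rw [if_pos rfl]
    have key : (Li b2 i) ∘ₗ LinearMap.mulLeft Aq (r (th i))
        = El b2 + (pA ^ (p i * p i) * qA ^ Bf i i) • (LinearMap.mulLeft Aq (th i) ∘ₗ Li b2 i) := by
      apply b2.ext
      intro pr
      rw [LinearMap.comp_apply, LinearMap.mulLeft_apply,
        rth_mul_b2 Bf p b2 (hmul := hmul) (r := r) (hr := hr) i pr]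
      simp only [map_add, map_smul, LinearMap.add_apply, LinearMap.smul_apply,
        LinearMap.comp_apply, LinearMap.mulLeft_apply, Li, El, sel2_b2]
      by_cases h1 : pr.1 = FreeMonoid.of i
      · rw [h1, if_neg (fun h => of_ne_one (mul_of_eq_of.mp h).2), if_pos rfl,
          if_neg of_ne_one, tw_of_of]
        simp [th, ← ofW_mul]
      · rw [if_neg h1, if_neg h1, smul_zero]
        by_cases h2 : pr.1 = 1
        · rw [if_pos (by rw [h2, mul_one]), if_pos h2]
          simp
        · rw [if_neg (fun h => h2 (mul_of_eq_of.mp h).2), if_neg h2]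
          simp
    have := DFunLike.congr_fun key t
    simpa using this
  · rw [if_neg hij, zero_add]
    have key : (Li b2 i) ∘ₗ LinearMap.mulLeft Aq (r (th j))
        = (pA ^ (p j * p i) * qA ^ Bf j i) • (LinearMap.mulLeft Aq (th j) ∘ₗ Li b2 i) := by
      apply b2.ext
      intro pr
      rw [LinearMap.comp_apply, LinearMap.mulLeft_apply,
        rth_mul_b2 Bf p b2 (hmul := hmul) (r := r) (hr := hr) j pr]
      simp only [map_add, map_smul, LinearMap.smul_apply,
        LinearMap.comp_apply, LinearMap.mulLeft_apply, Li, sel2_b2]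
      rw [if_neg (fun h => hij ((mul_of_eq_of.mp h).1).symm)]
      by_cases h1 : pr.1 = FreeMonoid.of i
      · rw [h1, if_pos rfl, if_pos rfl, tw_of_of]
        simp [th, ← ofW_mul]
      · rw [if_neg h1, if_neg h1]
        simp
    have := DFunLike.congr_fun key t
    simpa using this

include hmul hr in
lemma El_mul (j : I) (t : T2) :
    El b2 (r (th j) * t) = th j * El b2 t := by
  have key : (El b2) ∘ₗ LinearMap.mulLeft Aq (r (th j))
      = LinearMap.mulLeft Aq (th j) ∘ₗ El b2 := by
    apply b2.ext
    intro pr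
    rw [LinearMap.comp_apply, LinearMap.mulLeft_apply,
      rth_mul_b2 Bf p b2 (hmul := hmul) (r := r) (hr := hr) j pr]
    simp only [map_add, map_smul, LinearMap.add_apply, LinearMap.smul_apply,
      LinearMap.comp_apply, LinearMap.mulLeft_apply, El, sel2_b2]
    rw [if_neg of_mul_ne_one]
    by_cases h1 : pr.1 = 1
    · rw [if_pos h1, if_pos h1, h1, tw_one_right]
      simp [th, ← ofW_mul]
    · rw [if_neg h1, if_neg h1]
      simp
  exact DFunLike.congr_fun key t

include hmul hr in
lemma Ri_mul (i j : I) (t : T2) :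
    Ri b2 i (t * r (th j)) = (if i = j then Er b2 t else 0)
      + (pA ^ (p i * p j) * qA ^ Bf i j) • (Ri b2 i t * th j) := by
  by_cases hij : i = j
  · subst hij
    rw [if_pos rfl]
    have key : (Ri b2 i) ∘ₗ LinearMap.mulRight Aq (r (th i))
        = Er b2 + (pA ^ (p i * p i) * qA ^ Bf i i) • (LinearMap.mulRight Aq (th i) ∘ₗ Ri b2 i) := by
      apply b2.ext
      intro pr
      rw [LinearMap.comp_apply, LinearMap.mulRight_apply,
        b2_mul_rth Bf p b2 (hmul := hmul) (r := r) (hr := hr) i pr]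
      simp only [map_add, map_smul, LinearMap.add_apply, LinearMap.smul_apply,
        LinearMap.comp_apply, LinearMap.mulRight_apply, Ri, Er, sel2_b2]
      by_cases h1 : pr.2 = FreeMonoid.of i
      · rw [h1, if_neg (fun h => of_ne_one (of_mul_eq_of.mp h).1), if_pos rfl,
          if_neg of_ne_one, tw_of_of]
        simp [th, ← ofW_mul]
      · rw [if_neg h1, if_neg h1, smul_zero]
        by_cases h2 : pr.2 = 1
        · rw [if_pos (by rw [h2, one_mul]), if_pos h2]
          simp
        · rw [if_neg (fun h => h2 (of_mul_eq_of.mp h).1), if_neg h2]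
          simp
    have := DFunLike.congr_fun key t
    simpa using this
  · rw [if_neg hij, zero_add]
    have key : (Ri b2 i) ∘ₗ LinearMap.mulRight Aq (r (th j))
        = (pA ^ (p i * p j) * qA ^ Bf i j) • (LinearMap.mulRight Aq (th j) ∘ₗ Ri b2 i) := by
      apply b2.ext
      intro pr
      rw [LinearMap.comp_apply, LinearMap.mulRight_apply,
        b2_mul_rth Bf p b2 (hmul := hmul) (r := r) (hr := hr) j pr]
      simp only [map_add, map_smul, LinearMap.smul_apply,
        LinearMap.comp_apply, LinearMap.mulRight_apply, Ri, sel2_b2]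
      rw [if_neg (fun h => hij ((of_mul_eq_of.mp h).2).symm)]
      by_cases h1 : pr.2 = FreeMonoid.of i
      · rw [h1, if_pos rfl, if_pos rfl, tw_of_of]
        simp [th, ← ofW_mul]
      · rw [if_neg h1, if_neg h1]
        simp
    have := DFunLike.congr_fun key t
    simpa using this

include hmul hr in
lemma Er_mul (j : I) (t : T2) :
    Er b2 (t * r (th j)) = Er b2 t * th j := by
  have key : (Er b2) ∘ₗ LinearMap.mulRight Aq (r (th j))
      = LinearMap.mulRight Aq (th j) ∘ₗ Er b2 := by
    apply b2.ext
    intro pr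
    rw [LinearMap.comp_apply, LinearMap.mulRight_apply,
      b2_mul_rth Bf p b2 (hmul := hmul) (r := r) (hr := hr) j pr]
    simp only [map_add, map_smul, LinearMap.add_apply, LinearMap.smul_apply,
      LinearMap.comp_apply, LinearMap.mulRight_apply, Er, sel2_b2]
    rw [if_neg mul_of_ne_one]
    by_cases h1 : pr.2 = 1
    · rw [if_pos h1, if_pos h1, h1, tw_one_left]
      simp [th, ← ofW_mul]
    · rw [if_neg h1, if_neg h1]
      simp
  exact DFunLike.congr_fun key t

end Main
section Ind
variable {I : Type} [DecidableEq I] (Bf : I → I → ℤ) (p : I → ℕ)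
variable {T2 : Type} [Ring T2] [Algebra Aq T2]
variable (b2 : Module.Basis (FreeMonoid I × FreeMonoid I) Aq T2)
variable (hmul : ∀ w1 w2 w1' w2', b2 (w1, w2) * b2 (w1', w2')
        = tw Bf p w2 w1' • b2 (w1 * w1', w2 * w2'))
variable (r : FF I →ₐ[Aq] T2)
variable (hone : b2 (1, 1) = 1)
variable (hr : ∀ i, r (th i) = b2 (FreeMonoid.of i, 1) + b2 (1, FreeMonoid.of i))

lemma th_eq (j : I) : th j = ofW (FreeMonoid.of j) := rfl

include hone in
lemma El_one : El b2 (1 : T2) = 1 := by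
  rw [← hone, El, sel2_b2, if_pos rfl]
  exact ofW_one

include hone in
lemma Er_one : Er b2 (1 : T2) = 1 := by
  rw [← hone, Er, sel2_b2, if_pos rfl]
  exact ofW_one

include hone in
lemma Li_one (i : I) : Li b2 i (1 : T2) = 0 := by
  rw [← hone, Li, sel2_b2, if_neg (Ne.symm of_ne_one)]

include hone in
lemma Ri_one (i : I) : Ri b2 i (1 : T2) = 0 := by
  rw [← hone, Ri, sel2_b2, if_neg (Ne.symm of_ne_one)]

include hmul hone hr in
lemma El_r (w : FreeMonoid I) : El b2 (r (ofW w)) = ofW w := by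
  rw [← FreeMonoid.ofList_toList w]
  generalize FreeMonoid.toList w = l
  induction l with
  | nil =>
    rw [FreeMonoid.ofList_nil, ofW_one, map_one, El_one (b2 := b2) (hone := hone)]
  | cons j l ih =>
    rw [FreeMonoid.ofList_cons, ofW_mul, map_mul, ← th_eq,
      El_mul Bf p b2 (hmul := hmul) (r := r) (hr := hr) j _, ih]

include hmul hone hr in
lemma Er_r (w : FreeMonoid I) : Er b2 (r (ofW w)) = ofW w := by
  rw [← FreeMonoid.ofList_toList w]
  generalize FreeMonoid.toList w = l
  induction l using List.reverseRecOn with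
  | nil =>
    rw [FreeMonoid.ofList_nil, ofW_one, map_one, Er_one (b2 := b2) (hone := hone)]
  | append_singleton l j ih =>
    rw [FreeMonoid.ofList_append, ofW_mul, map_mul]
    have hof : FreeMonoid.ofList [j] = FreeMonoid.of j := rfl
    rw [hof, ← th_eq, Er_mul Bf p b2 (hmul := hmul) (r := r) (hr := hr) j _, ih]

variable (irm rim : I → FF I →ₗ[Aq] FF I)
variable (hir1 : ∀ i, irm i 1 = 0) (hri1 : ∀ i, rim i 1 = 0)
variable (hirg : ∀ i j, irm i (th j) = if i = j then 1 else 0)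
variable (hrig : ∀ i j, rim i (th j) = if i = j then 1 else 0)
variable (hirm : ∀ i (w w' : FreeMonoid I), irm i (ofW (w * w')) =
        irm i (ofW w) * ofW w' +
          (pA ^ (par p w * p i) * qA ^ wtB Bf w (FreeMonoid.of i)) •
            (ofW w * irm i (ofW w')))
variable (hrim : ∀ i (w w' : FreeMonoid I), rim i (ofW (w * w')) =
        (pA ^ (par p w' * p i) * qA ^ wtB Bf w' (FreeMonoid.of i)) •
          (rim i (ofW w) * ofW w') + ofW w * rim i (ofW w'))

lemma par_of (j : I) : par p (FreeMonoid.of j) = p j := by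
  simp [par, FreeMonoid.toList_of]

lemma wtB_of_of (j i : I) : wtB Bf (FreeMonoid.of j) (FreeMonoid.of i) = Bf j i := by
  simp [wtB, FreeMonoid.toList_of]

include hmul hone hr hir1 hirg hirm in
lemma Li_r (i : I) (w : FreeMonoid I) : Li b2 i (r (ofW w)) = irm i (ofW w) := by
  rw [← FreeMonoid.ofList_toList w]
  generalize FreeMonoid.toList w = l
  induction l with
  | nil =>
    rw [FreeMonoid.ofList_nil, ofW_one, map_one, Li_one (b2 := b2) (hone := hone),
      hir1]
  | cons j l ih =>
    rw [FreeMonoid.ofList_cons, hirm i (FreeMonoid.of j) (FreeMonoid.ofList l),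
      ofW_mul, map_mul, ← th_eq,
      Li_mul Bf p b2 (hmul := hmul) (r := r) (hr := hr) i j _, ih,
      El_r Bf p b2 (hmul := hmul) (hone := hone) (r := r) (hr := hr) _,
      hirg, par_of, wtB_of_of]
    by_cases hij : i = j <;> simp [hij]

include hmul hone hr hri1 hrig hrim in
lemma Ri_r (hsym : ∀ a b : I, Bf a b = Bf b a) (i : I) (w : FreeMonoid I) :
    Ri b2 i (r (ofW w)) = rim i (ofW w) := by
  rw [← FreeMonoid.ofList_toList w]
  generalize FreeMonoid.toList w = l
  induction l using List.reverseRecOn with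
  | nil =>
    rw [FreeMonoid.ofList_nil, ofW_one, map_one, Ri_one (b2 := b2) (hone := hone),
      hri1]
  | append_singleton l j ih =>
    have hof : FreeMonoid.ofList [j] = FreeMonoid.of j := rfl
    rw [FreeMonoid.ofList_append, hof,
      hrim i (FreeMonoid.ofList l) (FreeMonoid.of j), ofW_mul, map_mul, ← th_eq,
      Ri_mul Bf p b2 (hmul := hmul) (r := r) (hr := hr) i j _, ih,
      Er_r Bf p b2 (hmul := hmul) (hone := hone) (r := r) (hr := hr) _,
      hrig, par_of, wtB_of_of, hsym i j, mul_comm (p i) (p j)]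
    by_cases hij : i = j <;> simp [hij, add_comm]

end Ind
section Form
variable {I : Type} [DecidableEq I] (Bf : I → I → ℤ) (p d : I → ℕ)
variable {T2 : Type} [Ring T2] [Algebra Aq T2]
variable (b2 : Module.Basis (FreeMonoid I × FreeMonoid I) Aq T2)
variable (hmul : ∀ w1 w2 w1' w2', b2 (w1, w2) * b2 (w1', w2')
        = tw Bf p w2 w1' • b2 (w1 * w1', w2 * w2'))
variable (r : FF I →ₐ[Aq] T2)
variable (hone : b2 (1, 1) = 1)
variable (hr : ∀ i, r (th i) = b2 (FreeMonoid.of i, 1) + b2 (1, FreeMonoid.of i))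
variable (B : FF I →ₗ[Aq] FF I →ₗ[Aq] Aq)
variable (hB : FormProps I Bf p d T2 b2 r B)

include hone in
lemma repr_r_one : b2.repr (r (1 : FF I)) =
    Finsupp.single ((1 : FreeMonoid I), (1 : FreeMonoid I)) 1 := by
  rw [map_one, ← hone, b2.repr_self]

include hr in
lemma repr_r_th (j : I) : b2.repr (r (th j)) =
    Finsupp.single ((FreeMonoid.of j : FreeMonoid I), (1 : FreeMonoid I)) 1
      + Finsupp.single ((1 : FreeMonoid I), FreeMonoid.of j) 1 := by
  rw [hr, map_add, b2.repr_self, b2.repr_self]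

lemma sum_two {M : Type*} [AddCommMonoid M] (a b : FreeMonoid I × FreeMonoid I)
    (f : FreeMonoid I × FreeMonoid I → Aq → M) (h0 : ∀ pr, f pr 0 = 0)
    (hadd : ∀ pr c1 c2, f pr (c1 + c2) = f pr c1 + f pr c2) :
    (Finsupp.single a (1 : Aq) + Finsupp.single b (1 : Aq)).sum f = f a 1 + f b 1 := by
  rw [Finsupp.sum_add_index' h0 hadd, Finsupp.sum_single_index (h0 a),
    Finsupp.sum_single_index (h0 b)]

include hB hr in
lemma B_one_th (j : I) : B 1 (th j) = 0 := by
  have h := hB.mul_left 1 1 (th j)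
  rw [repr_r_th (b2 := b2) (r := r) (hr := hr) j,
    sum_two _ _ (fun pr c => c * B 1 (ofW pr.1) * B 1 (ofW pr.2))
      (by intro pr; ring) (by intro pr c1 c2; ring)] at h
  simp only [one_mul, mul_one, ofW_one, hB.one_one, ← th_eq] at h
  exact (left_eq_add.mp h)

include hB hr in
lemma B_th_one (j : I) : B (th j) 1 = 0 := by
  have h := hB.mul_right (th j) 1 1
  rw [repr_r_th (b2 := b2) (r := r) (hr := hr) j,
    sum_two _ _ (fun pr c => c * B (ofW pr.1) 1 * B (ofW pr.2) 1)
      (by intro pr; ring) (by intro pr c1 c2; ring)] at h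
  simp only [one_mul, mul_one, ofW_one, hB.one_one, ← th_eq] at h
  exact (left_eq_add.mp h)

include hB hone hr in
lemma B_one_word (w : FreeMonoid I) : B 1 (ofW w) = if w = 1 then 1 else 0 := by
  rw [← FreeMonoid.ofList_toList w]
  generalize FreeMonoid.toList w = l
  cases l with
  | nil => rw [FreeMonoid.ofList_nil, ofW_one, hB.one_one, if_pos rfl]
  | cons j l =>
    rw [FreeMonoid.ofList_cons, if_neg of_mul_ne_one, ofW_mul, ← th_eq,
      hB.mul_right, repr_r_one (b2 := b2) (r := r) (hone := hone),
      Finsupp.sum_single_index (by ring)]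
    rw [ofW_one, one_mul, B_one_th Bf p d b2 r hr B hB j,
      zero_mul]

include hB hone hr in
lemma B_word_one (w : FreeMonoid I) : B (ofW w) 1 = if w = 1 then 1 else 0 := by
  rw [← FreeMonoid.ofList_toList w]
  generalize FreeMonoid.toList w = l
  cases l with
  | nil => rw [FreeMonoid.ofList_nil, ofW_one, hB.one_one, if_pos rfl]
  | cons j l =>
    rw [FreeMonoid.ofList_cons, if_neg of_mul_ne_one, ofW_mul, ← th_eq,
      hB.mul_left, repr_r_one (b2 := b2) (r := r) (hone := hone),
      Finsupp.sum_single_index (by ring)]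
    rw [ofW_one, one_mul, B_th_one Bf p d b2 r hr B hB j,
      zero_mul]

include hB hone hr in
lemma B_th_word (i : I) (w : FreeMonoid I) :
    B (th i) (ofW w) = if w = FreeMonoid.of i then B (th i) (th i) else 0 := by
  rw [← FreeMonoid.ofList_toList w]
  generalize FreeMonoid.toList w = l
  cases l with
  | nil =>
    rw [FreeMonoid.ofList_nil, ofW_one, if_neg (Ne.symm of_ne_one),
      B_th_one Bf p d b2 r hr B hB i]
  | cons j l =>
    rw [FreeMonoid.ofList_cons, ofW_mul, ← th_eq, hB.mul_right,
      repr_r_th (b2 := b2) (r := r) (hr := hr) i,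
      sum_two _ _ _ (by intro pr; ring) (by intro pr c1 c2; ring)]
    simp only [one_mul, ofW_one, ← th_eq]
    rw [B_one_th Bf p d b2 r hr B hB j, zero_mul, add_zero,
      B_one_word Bf p d b2 r hone hr B hB]
    by_cases hl : FreeMonoid.ofList l = 1
    · rw [if_pos hl, mul_one, hB.gen, hl, mul_one]
      by_cases hij : i = j
      · rw [if_pos hij, if_pos (by rw [hij]), hB.gen, if_pos rfl, hij]
      · rw [if_neg hij, if_neg (fun h => hij (FreeMonoid.of_injective h).symm)]
    · rw [if_neg hl, mul_zero, if_neg (fun h => hl (mul_of_eq_of.mp h).2)]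

include hB hone hr in
lemma B_word_th (i : I) (w : FreeMonoid I) :
    B (ofW w) (th i) = if w = FreeMonoid.of i then B (th i) (th i) else 0 := by
  rw [← FreeMonoid.ofList_toList w]
  generalize FreeMonoid.toList w = l
  cases l with
  | nil =>
    rw [FreeMonoid.ofList_nil, ofW_one, if_neg (Ne.symm of_ne_one),
      B_one_th Bf p d b2 r hr B hB i]
  | cons j l =>
    rw [FreeMonoid.ofList_cons, ofW_mul, ← th_eq, hB.mul_left,
      repr_r_th (b2 := b2) (r := r) (hr := hr) i,
      sum_two _ _ _ (by intro pr; ring) (by intro pr c1 c2; ring)]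
    simp only [one_mul, ofW_one, ← th_eq]
    rw [B_th_one Bf p d b2 r hr B hB j, zero_mul, add_zero,
      B_word_one Bf p d b2 r hone hr B hB]
    by_cases hl : FreeMonoid.ofList l = 1
    · rw [if_pos hl, mul_one, hB.gen, hl, mul_one]
      by_cases hij : j = i
      · rw [if_pos hij, if_pos (by rw [hij]), hB.gen, if_pos rfl, hij]
      · rw [if_neg hij, if_neg (fun h => hij (FreeMonoid.of_injective h))]
    · rw [if_neg hl, mul_zero, if_neg (fun h => hl (mul_of_eq_of.mp h).2)]

end Form
section Adj
variable {I : Type} [DecidableEq I] (Bf : I → I → ℤ) (p d : I → ℕ)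
variable {T2 : Type} [Ring T2] [Algebra Aq T2]
variable (b2 : Module.Basis (FreeMonoid I × FreeMonoid I) Aq T2)
variable (hmul : ∀ w1 w2 w1' w2', b2 (w1, w2) * b2 (w1', w2')
        = tw Bf p w2 w1' • b2 (w1 * w1', w2 * w2'))
variable (r : FF I →ₐ[Aq] T2)
variable (hone : b2 (1, 1) = 1)
variable (hr : ∀ i, r (th i) = b2 (FreeMonoid.of i, 1) + b2 (1, FreeMonoid.of i))
variable (B : FF I →ₗ[Aq] FF I →ₗ[Aq] Aq)
variable (hB : FormProps I Bf p d T2 b2 r B)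
variable (irm rim : I → FF I →ₗ[Aq] FF I)
variable (hir1 : ∀ i, irm i 1 = 0) (hri1 : ∀ i, rim i 1 = 0)
variable (hirg : ∀ i j, irm i (th j) = if i = j then 1 else 0)
variable (hrig : ∀ i j, rim i (th j) = if i = j then 1 else 0)
variable (hirm : ∀ i (w w' : FreeMonoid I), irm i (ofW (w * w')) =
        irm i (ofW w) * ofW w' +
          (pA ^ (par p w * p i) * qA ^ wtB Bf w (FreeMonoid.of i)) •
            (ofW w * irm i (ofW w')))
variable (hrim : ∀ i (w w' : FreeMonoid I), rim i (ofW (w * w')) =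
        (pA ^ (par p w' * p i) * qA ^ wtB Bf w' (FreeMonoid.of i)) •
          (rim i (ofW w) * ofW w') + ofW w * rim i (ofW w'))

include hone hr hB in
lemma sumA (i : I) (x : FF I) (g : FF I →ₗ[Aq] Aq) :
    ((b2.repr (r x)).sum fun pr c => c * B (th i) (ofW pr.1) * g (ofW pr.2))
      = B (th i) (th i) * g (Li b2 i (r x)) := by
  rw [Li, sel2_apply, map_finsuppSum, Finsupp.mul_sum]
  apply Finsupp.sum_congr
  intro pr _
  rw [B_th_word Bf p d b2 r hone hr B hB i pr.1]
  by_cases h : pr.1 = FreeMonoid.of i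
  · rw [if_pos h, if_pos h, map_smul, smul_eq_mul]; ring
  · rw [if_neg h, if_neg h, map_zero, mul_zero, mul_zero, zero_mul]

include hone hr hB in
lemma sumA' (i : I) (x : FF I) (g : FF I →ₗ[Aq] Aq) :
    ((b2.repr (r x)).sum fun pr c => c * g (ofW pr.1) * B (th i) (ofW pr.2))
      = B (th i) (th i) * g (Ri b2 i (r x)) := by
  rw [Ri, sel2_apply, map_finsuppSum, Finsupp.mul_sum]
  apply Finsupp.sum_congr
  intro pr _
  rw [B_th_word Bf p d b2 r hone hr B hB i pr.2]
  by_cases h : pr.2 = FreeMonoid.of i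
  · rw [if_pos h, if_pos h, map_smul, smul_eq_mul]; ring
  · rw [if_neg h, if_neg h, map_zero, mul_zero, mul_zero]

include hmul hone hr hir1 hirg hirm in
lemma Li_all (i : I) (x : FF I) : Li b2 i (r x) = irm i x := by
  induction x using MonoidAlgebra.induction_on with
  | of w => exact Li_r Bf p b2 hmul r hone hr irm hir1 hirg hirm i w
  | add f g hf hg => rw [map_add, map_add, hf, hg, map_add]
  | smul c f hf => rw [map_smul, map_smul, hf, map_smul]

include hmul hone hr hri1 hrig hrim in
lemma Ri_all (hsym : ∀ a b : I, Bf a b = Bf b a) (i : I) (x : FF I) :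
    Ri b2 i (r x) = rim i x := by
  induction x using MonoidAlgebra.induction_on with
  | of w => exact Ri_r Bf p b2 hmul r hone hr rim hri1 hrig hrim hsym i w
  | add f g hf hg => rw [map_add, map_add, hf, hg, map_add]
  | smul c f hf => rw [map_smul, map_smul, hf, map_smul]

include hmul hone hr hB hir1 hirg hirm in
lemma adjL (i : I) (x y : FF I) :
    B (th i * y) x = B (th i) (th i) * B y (irm i x) := by
  rw [hB.mul_left (th i) y x,
    sumA Bf p d b2 r hone hr B hB i x (B y),
    Li_all Bf p b2 hmul r hone hr irm hir1 hirg hirm i x]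

include hmul hone hr hB hri1 hrig hrim in
lemma adjR (hsym : ∀ a b : I, Bf a b = Bf b a) (i : I) (x y : FF I) :
    B (y * th i) x = B (th i) (th i) * B y (rim i x) := by
  rw [hB.mul_left y (th i) x,
    sumA' Bf p d b2 r hone hr B hB i x (B y),
    Ri_all Bf p b2 hmul r hone hr rim hri1 hrig hrim hsym i x]

include hmul hone hr hB hir1 hirg hirm in
lemma Bsym_word (l : List I) :
    ∀ w : FreeMonoid I,
      B (ofW (FreeMonoid.ofList l)) (ofW w) = B (ofW w) (ofW (FreeMonoid.ofList l)) := by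
  induction l with
  | nil =>
    intro w
    rw [FreeMonoid.ofList_nil, ofW_one, B_one_word Bf p d b2 r hone hr B hB w,
      B_word_one Bf p d b2 r hone hr B hB w]
  | cons j l ih =>
    intro w
    rw [FreeMonoid.ofList_cons, ofW_mul, ← th_eq,
      adjL Bf p d b2 hmul r hone hr B hB irm hir1 hirg hirm j (ofW w)
        (ofW (FreeMonoid.ofList l)),
      hB.mul_right (ofW w) (th j) (ofW (FreeMonoid.ofList l))]
    have step : ((b2.repr (r (ofW w))).sum fun pr c =>
        c * B (ofW pr.1) (th j) * B (ofW pr.2) (ofW (FreeMonoid.ofList l)))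
        = ((b2.repr (r (ofW w))).sum fun pr c =>
        c * B (th j) (ofW pr.1) * B (ofW (FreeMonoid.ofList l)) (ofW pr.2)) := by
      apply Finsupp.sum_congr
      intro pr _
      rw [B_word_th Bf p d b2 r hone hr B hB j pr.1,
        ← B_th_word Bf p d b2 r hone hr B hB j pr.1, ih pr.2]
    rw [step, sumA Bf p d b2 r hone hr B hB j (ofW w) (B (ofW (FreeMonoid.ofList l))),
      Li_all Bf p b2 hmul r hone hr irm hir1 hirg hirm j (ofW w)]

include hmul hone hr hB hir1 hirg hirm in
lemma Bsym (x y : FF I) : B x y = B y x := by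
  have key : ∀ (u : FreeMonoid I) (y : FF I), B (ofW u) y = B y (ofW u) := by
    intro u
    have base := Bsym_word Bf p d b2 hmul r hone hr B hB irm hir1 hirg hirm
      (FreeMonoid.toList u)
    rw [FreeMonoid.ofList_toList] at base
    intro y
    induction y using MonoidAlgebra.induction_on with
    | of w =>
      have hofw : MonoidAlgebra.of Aq (FreeMonoid I) w = ofW w := rfl
      rw [hofw]
      exact base w
    | add f g hf hg => rw [map_add, map_add, LinearMap.add_apply, hf, hg]
    | smul c f hf => rw [map_smul, map_smul, LinearMap.smul_apply, hf]
  induction x using MonoidAlgebra.induction_on with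
  | of u =>
      have hofw : MonoidAlgebra.of Aq (FreeMonoid I) u = ofW u := rfl
      rw [hofw]
      exact key u y
  | add f g hf hg => rw [map_add, map_add, LinearMap.add_apply, hf, hg]
  | smul c f hf => rw [map_smul, map_smul, LinearMap.smul_apply, hf]

end Adj
section Reg

lemma ratfunc_unit (c : RatFunc ℚ) (hc : c = 1 ∨ c = -1) (n : ℕ) (hn : 0 < n) :
    (1 : RatFunc ℚ) - c * ((RatFunc.X : RatFunc ℚ) ^ n) ^ (-2 : ℤ) ≠ 0 := by
  intro h
  have hxn : (RatFunc.X : RatFunc ℚ) ^ n ≠ 0 := pow_ne_zero _ RatFunc.X_ne_zero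
  have h1 : (1 : RatFunc ℚ) = c * ((RatFunc.X : RatFunc ℚ) ^ n) ^ (-2 : ℤ) :=
    sub_eq_zero.mp h
  have hz : ((RatFunc.X : RatFunc ℚ) ^ n) ^ (-2 : ℤ)
      = (((RatFunc.X : RatFunc ℚ) ^ n) ^ (2 : ℕ))⁻¹ := by
    rw [zpow_neg, show ((2 : ℤ)) = ((2 : ℕ) : ℤ) by norm_num, zpow_natCast]
  rw [hz] at h1
  have h2 : c = ((RatFunc.X : RatFunc ℚ) ^ n) ^ (2 : ℕ) := by
    field_simp at h1
    first
    | exact h1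
    | exact h1.symm
    | linear_combination h1
    | linear_combination -h1
  rcases hc with rfl | rfl
  · have h3 : ((Polynomial.X : Polynomial ℚ) ^ n) ^ (2 : ℕ) = 1 :=
      RatFunc.algebraMap_injective ℚ
        (by rw [map_pow, map_pow, RatFunc.algebraMap_X, map_one]; exact h2.symm)
    have h5 := congrArg Polynomial.natDegree h3
    simp [Polynomial.natDegree_pow] at h5
    omega
  · have h3 : ((Polynomial.X : Polynomial ℚ) ^ n) ^ (2 : ℕ) = -1 :=
      RatFunc.algebraMap_injective ℚ
        (by rw [map_pow, map_pow, RatFunc.algebraMap_X, map_neg, map_one]; exact h2.symm)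
    have h5 := congrArg Polynomial.natDegree h3
    simp [Polynomial.natDegree_pow, Polynomial.natDegree_neg] at h5
    omega

variable {I : Type} [DecidableEq I] (Bf : I → I → ℤ) (p d : I → ℕ)
variable {T2 : Type} [Ring T2] [Algebra Aq T2]
variable (b2 : Module.Basis (FreeMonoid I × FreeMonoid I) Aq T2)
variable (r : FF I →ₐ[Aq] T2)
variable (B : FF I →ₗ[Aq] FF I →ₗ[Aq] Aq)
variable (hB : FormProps I Bf p d T2 b2 r B)

include hB in
lemma Breg (i : I) (hd : 0 < d i) (t : Aq) (h : B (th i) (th i) * t = 0) : t = 0 := by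
  rw [hB.gen i i, if_pos rfl] at h
  set u : Aq := 1 - pi' p i * qi d i ^ (-2 : ℤ) with hu
  have hu1 : u.1 ≠ 0 := by
    have : u.1 = 1 - (1 : RatFunc ℚ) * ((RatFunc.X : RatFunc ℚ) ^ d i) ^ (-2 : ℤ) := by
      simp [hu, pi', qi, pA, qA]
    rw [this]
    exact ratfunc_unit 1 (Or.inl rfl) (d i) hd
  have hu2 : u.2 ≠ 0 := by
    have : u.2 = 1 - ((-1 : RatFunc ℚ) ^ p i) * ((RatFunc.X : RatFunc ℚ) ^ d i) ^ (-2 : ℤ) := by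
      simp [hu, pi', qi, pA, qA]
    rw [this]
    exact ratfunc_unit _ (neg_one_pow_eq_or _ _) (d i) hd
  have h1 : u.1⁻¹ * t.1 = 0 := by
    have := congrArg Prod.fst h
    simpa using this
  have h2 : u.2⁻¹ * t.2 = 0 := by
    have := congrArg Prod.snd h
    simpa using this
  have ht1 : t.1 = 0 := by
    rcases mul_eq_zero.mp h1 with h' | h'
    · exact absurd h' (inv_ne_zero hu1)
    · exact h'
  have ht2 : t.2 = 0 := by
    rcases mul_eq_zero.mp h2 with h' | h'
    · exact absurd h' (inv_ne_zero hu2)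
    · exact h'
  exact Prod.ext ht1 ht2

end Reg
/-- The twisted derivations `ᵢr, rᵢ` are adjoint to left/right multiplication by `θ_i`:
`(θ_i y, x) = (θ_i,θ_i)(y, ᵢr(x))` and `(y θ_i, x) = (θ_i,θ_i)(y, rᵢ(x))`; they
preserve the radical of the form (hence descend to `f`); and if `x ∈ f` is homogeneous
of nonzero weight with `rᵢ(x) = 0` in `f` for all `i`, then `x = 0` in `f` (membership
in the radical expresses vanishing in `f = 'f/Rad`). -/
theorem derivations_adjoint_and_kill
    (I : Type) [DecidableEq I] (Bf : I → I → ℤ) (p d : I → ℕ) (aij : I → I → ℤ)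
    (hSCD : SCD I Bf p d aij)
    (T2 : Type) [Ring T2] [Algebra Aq T2]
    (b2 : Module.Basis (FreeMonoid I × FreeMonoid I) Aq T2)
    (hone : b2 (1, 1) = 1)
    (hmul : ∀ w1 w2 w1' w2', b2 (w1, w2) * b2 (w1', w2')
        = tw Bf p w2 w1' • b2 (w1 * w1', w2 * w2'))
    (r : FF I →ₐ[Aq] T2)
    (hr : ∀ i, r (th i) = b2 (FreeMonoid.of i, 1) + b2 (1, FreeMonoid.of i))
    (B : FF I →ₗ[Aq] FF I →ₗ[Aq] Aq)
    (hB : FormProps I Bf p d T2 b2 r B)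
    (irm rim : I → FF I →ₗ[Aq] FF I)
    (hir1 : ∀ i, irm i 1 = 0) (hri1 : ∀ i, rim i 1 = 0)
    (hirg : ∀ i j, irm i (th j) = if i = j then 1 else 0)
    (hrig : ∀ i j, rim i (th j) = if i = j then 1 else 0)
    (hirm : ∀ i (w w' : FreeMonoid I), irm i (ofW (w * w')) =
        irm i (ofW w) * ofW w' +
          (pA ^ (par p w * p i) * qA ^ wtB Bf w (FreeMonoid.of i)) •
            (ofW w * irm i (ofW w')))
    (hrim : ∀ i (w w' : FreeMonoid I), rim i (ofW (w * w')) =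
        (pA ^ (par p w' * p i) * qA ^ wtB Bf w' (FreeMonoid.of i)) •
          (rim i (ofW w) * ofW w') + ofW w * rim i (ofW w')) :
    (∀ i (x y : FF I), B (th i * y) x = B (th i) (th i) * B y (irm i x)) ∧
    (∀ i (x y : FF I), B (y * th i) x = B (th i) (th i) * B y (rim i x)) ∧
    (∀ i (x : FF I), (∀ z, B x z = 0) →
        (∀ z, B (irm i x) z = 0) ∧ (∀ z, B (rim i x) z = 0)) ∧
    (∀ ν : I →₀ ℕ, ν ≠ 0 →
      ∀ x ∈ Submodule.span Aq {z : FF I | ∃ w, wtF w = ν ∧ z = ofW w},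
        (∀ i, ∀ z, B (rim i x) z = 0) → ∀ z, B x z = 0) := by
  have hsym : ∀ a b : I, Bf a b = Bf b a := hSCD.symm
  have ADL : ∀ i (x y : FF I), B (th i * y) x = B (th i) (th i) * B y (irm i x) :=
    fun i x y => adjL Bf p d b2 hmul r hone hr B hB irm hir1 hirg hirm i x y
  have ADR : ∀ i (x y : FF I), B (y * th i) x = B (th i) (th i) * B y (rim i x) :=
    fun i x y => adjR Bf p d b2 hmul r hone hr B hB rim hri1 hrig hrim hsym i x y
  have SYM : ∀ x y : FF I, B x y = B y x :=
    fun x y => Bsym Bf p d b2 hmul r hone hr B hB irm hir1 hirg hirm x y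
  have REG : ∀ (i : I) (t : Aq), B (th i) (th i) * t = 0 → t = 0 :=
    fun i t h => Breg Bf p d b2 r B hB i (hSCD.dpos i) t h
  refine ⟨ADL, ADR, ?_, ?_⟩
  · intro i x hx
    constructor
    · intro z
      have h1 : B (th i) (th i) * B z (irm i x) = 0 := by
        rw [← ADL i x z, SYM (th i * z) x]
        exact hx _
      rw [SYM]
      exact REG i _ h1
    · intro z
      have h1 : B (th i) (th i) * B z (rim i x) = 0 := by
        rw [← ADR i x z, SYM (z * th i) x]
        exact hx _
      rw [SYM]
      exact REG i _ h1
  · intro ν hν x hx hrad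
    have hx1 : B x 1 = 0 := by
      have hle : Submodule.span Aq {z : FF I | ∃ w, wtF w = ν ∧ z = ofW w}
          ≤ LinearMap.ker (B.flip 1) := by
        apply Submodule.span_le.mpr
        rintro z ⟨w, hw, rfl⟩
        simp only [SetLike.mem_coe, LinearMap.mem_ker, LinearMap.flip_apply]
        rw [B_word_one Bf p d b2 r hone hr B hB w, if_neg ?_]
        intro h1
        apply hν
        rw [← hw, h1]
        simp [wtF, FreeMonoid.toList_one]
      have := hle hx
      simpa using this
    intro z
    induction z using MonoidAlgebra.induction_on with
    | of u =>
      have hofw : MonoidAlgebra.of Aq (FreeMonoid I) u = ofW u := rfl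
      rw [hofw]
      rcases List.eq_nil_or_concat (FreeMonoid.toList u) with hnil | ⟨L, b, hLb⟩
      · have hu1 : u = 1 := by
          rw [← FreeMonoid.ofList_toList u, hnil, FreeMonoid.ofList_nil]
        rw [hu1, ofW_one]
        exact hx1
      · have hu : u = FreeMonoid.ofList L * FreeMonoid.of b := by
          rw [← FreeMonoid.ofList_toList u, hLb, List.concat_eq_append,
            FreeMonoid.ofList_append]
          rfl
        rw [hu, ofW_mul, ← th_eq, SYM, ADR b x (ofW (FreeMonoid.ofList L)),
          SYM (ofW (FreeMonoid.ofList L)) (rim b x), hrad b _, mul_zero]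
    | add f g hf hg => rw [map_add, hf, hg, add_zero]
    | smul c f hf => rw [map_smul, hf, smul_zero]
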